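/- (Rademacher complexity of the distillation loss class.) Let x₁, …, x_N ∈ ℝ^d, let f_T : ℝ^d → ℝ^m satisfy ‖f_T(xᵢ)‖ ≤ D for all i, let φᵢ ∈ ℝ^r satisfy ‖φᵢ‖ ≤ C for all i, and let B > 0. Then 𝔼_σ[ sup_{W ∈ ℝ^{m×r}, ‖W‖_F ≤ B} (1/N) Σ_{i=1}^N σᵢ ‖f_T(xᵢ) − W φᵢ‖² ] ≤ 2 B C (D + B C) / √N, where σ = (σ₁, …, σ_N) is distributed uniformly on {−1, +1}^N. -/

import Mathlib

open scoped BigOperators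

/-- The ±1 sign associated to a Boolean: uniform `σ : Fin N → Bool` encodes a uniform
Rademacher vector `σ : {−1,+1}^N`. -/
noncomputable def radSign (b : Bool) : ℝ := if b then 1 else -1

/-- The student output `W φ` for a weight matrix `W` viewed as an element of the Euclidean
space of `m × r` matrices (whose norm is the Frobenius norm). -/
noncomputable def studentApply {m r : ℕ} (W : EuclideanSpace ℝ (Fin m × Fin r))
    (v : EuclideanSpace ℝ (Fin r)) : EuclideanSpace ℝ (Fin m) :=
  WithLp.toLp 2 (fun a => ∑ s, W (a, s) * v s)

lemma radSign_mul_self (b : Bool) : radSign b * radSign b = 1 := by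
  cases b <;> simp [radSign]

lemma radSign_not (b : Bool) : radSign (!b) = - radSign b := by
  cases b <;> simp [radSign]

lemma sum_radSign_mul {N : ℕ} (i : Fin N) (c : (Fin N → Bool) → ℝ)
    (hc : ∀ σ b, c (Function.update σ i b) = c σ) :
    ∑ σ : Fin N → Bool, radSign (σ i) * c σ = 0 := by
  classical
  apply Finset.sum_ninvolution (fun σ => Function.update σ i (!σ i))
  · intro σ
    rw [hc, Function.update_self, radSign_not]
    ring
  · intro σ h hh
    have := congrFun hh i
    simp [Function.update_self] at this
  · intro σ; exact Finset.mem_univ _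
  · intro σ
    funext j
    by_cases hj : j = i
    · subst hj; simp [Function.update_self]
    · simp [Function.update_of_ne hj]

lemma sum_radSign_mul_radSign {N : ℕ} (i j : Fin N) :
    ∑ σ : Fin N → Bool, radSign (σ i) * radSign (σ j)
      = if i = j then (2:ℝ)^N else 0 := by
  rcases eq_or_ne i j with rfl | hij
  · simp only [if_pos rfl]
    rw [Finset.sum_congr rfl (fun σ _ => radSign_mul_self (σ i))]
    simp [Finset.card_univ]
  · rw [if_neg hij]
    exact sum_radSign_mul i (fun σ => radSign (σ j))
      (fun σ b => by show radSign (Function.update σ i b j) = radSign (σ j); rw [Function.update_of_ne (Ne.symm hij)])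

lemma sum_sq_sum_radSign {N : ℕ} (u : Fin N → ℝ) :
    ∑ σ : Fin N → Bool, (∑ i, radSign (σ i) * u i) ^ 2
      = 2 ^ N * ∑ i, u i ^ 2 := by
  have : ∀ σ : Fin N → Bool, (∑ i, radSign (σ i) * u i) ^ 2
      = ∑ i, ∑ j, (radSign (σ i) * radSign (σ j)) * (u i * u j) := by
    intro σ
    rw [sq, Finset.sum_mul_sum]
    apply Finset.sum_congr rfl; intro i _
    apply Finset.sum_congr rfl; intro j _
    ring
  simp_rw [this]
  rw [Finset.sum_comm]
  have : ∀ i : Fin N, ∑ σ : Fin N → Bool, ∑ j, (radSign (σ i) * radSign (σ j)) * (u i * u j)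
      = 2 ^ N * u i ^ 2 := by
    intro i
    rw [Finset.sum_comm]
    have : ∀ j : Fin N, ∑ σ : Fin N → Bool, (radSign (σ i) * radSign (σ j)) * (u i * u j)
        = (if i = j then (2:ℝ)^N else 0) * (u i * u j) := by
      intro j
      rw [← Finset.sum_mul, sum_radSign_mul_radSign]
    simp_rw [this]
    simp only [ite_mul, zero_mul, Finset.sum_ite_eq, Finset.mem_univ, if_pos]
    ring
  simp_rw [this, ← Finset.mul_sum]

lemma eucl_norm_sq {ι : Type*} [Fintype ι] (y : EuclideanSpace ℝ ι) :
    ‖y‖ ^ 2 = ∑ p, y p ^ 2 := by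
  rw [EuclideanSpace.norm_eq, Real.sq_sqrt (Finset.sum_nonneg fun p _ => sq_nonneg _)]
  simp [Real.norm_eq_abs, sq_abs]

lemma abs_sum_mul_le {ι : Type*} [Fintype ι] (w v : ι → ℝ) :
    |∑ p, w p * v p| ≤ Real.sqrt (∑ p, w p ^ 2) * Real.sqrt (∑ p, v p ^ 2) := by
  rw [← Real.sqrt_mul (Finset.sum_nonneg fun p _ => sq_nonneg _)]
  rw [← Real.sqrt_sq_eq_abs (∑ p, w p * v p)]
  exact Real.sqrt_le_sqrt (Finset.sum_mul_sq_le_sq_mul_sq _ _ _)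

lemma sum_le_sqrt_card_mul {α : Type*} (s : Finset α) (f : α → ℝ) (hf : ∀ a, 0 ≤ f a) :
    ∑ a ∈ s, f a ≤ Real.sqrt (s.card * ∑ a ∈ s, f a ^ 2) := by
  rw [Real.le_sqrt (Finset.sum_nonneg fun a _ => hf a) (by positivity)]
  exact sq_sum_le_card_mul_sum_sq

noncomputable def sigVec {N : ℕ} {ι : Type*} [Fintype ι] (u : Fin N → ι → ℝ)
    (σ : Fin N → Bool) : ι → ℝ := fun p => ∑ i, radSign (σ i) * u i p

noncomputable def sigNorm {N : ℕ} {ι : Type*} [Fintype ι] (u : Fin N → ι → ℝ)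
    (σ : Fin N → Bool) : ℝ := Real.sqrt (∑ p, sigVec u σ p ^ 2)

lemma sigNorm_nonneg {N : ℕ} {ι : Type*} [Fintype ι] (u : Fin N → ι → ℝ)
    (σ : Fin N → Bool) : 0 ≤ sigNorm u σ := Real.sqrt_nonneg _

lemma sigNorm_sq {N : ℕ} {ι : Type*} [Fintype ι] (u : Fin N → ι → ℝ) (σ : Fin N → Bool) :
    sigNorm u σ ^ 2 = ∑ p, sigVec u σ p ^ 2 :=
  Real.sq_sqrt (Finset.sum_nonneg fun p _ => sq_nonneg _)

lemma sum_sigNorm_le {N : ℕ} {ι : Type*} [Fintype ι] (u : Fin N → ι → ℝ) (K : ℝ)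
    (hK : ∀ i, ∑ p, u i p ^ 2 ≤ K) :
    ∑ σ : Fin N → Bool, sigNorm u σ ≤ 2 ^ N * Real.sqrt ((N : ℝ) * K) := by
  have h1 : ∑ σ : Fin N → Bool, sigNorm u σ
      ≤ Real.sqrt ((2:ℝ) ^ N * ∑ σ : Fin N → Bool, sigNorm u σ ^ 2) := by
    have := sum_le_sqrt_card_mul (Finset.univ : Finset (Fin N → Bool)) (sigNorm u)
      (sigNorm_nonneg u)
    simpa [Finset.card_univ] using this
  have h2 : ∑ σ : Fin N → Bool, sigNorm u σ ^ 2 ≤ 2 ^ N * ((N : ℝ) * K) := by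
    simp_rw [sigNorm_sq]
    rw [Finset.sum_comm]
    have : ∀ p : ι, ∑ σ : Fin N → Bool, sigVec u σ p ^ 2 = 2 ^ N * ∑ i, u i p ^ 2 :=
      fun p => sum_sq_sum_radSign (fun i => u i p)
    simp_rw [this, ← Finset.mul_sum]
    rw [Finset.sum_comm]
    have : ∑ i : Fin N, ∑ p : ι, u i p ^ 2 ≤ (N : ℝ) * K := by
      calc ∑ i : Fin N, ∑ p : ι, u i p ^ 2 ≤ ∑ _i : Fin N, K :=
            Finset.sum_le_sum fun i _ => hK i
        _ = (N : ℝ) * K := by simp [mul_comm]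
    have h2N : (0:ℝ) ≤ 2 ^ N := by positivity
    nlinarith
  calc ∑ σ : Fin N → Bool, sigNorm u σ ≤ _ := h1
    _ ≤ Real.sqrt ((2:ℝ)^N * (2^N * ((N:ℝ) * K))) := by
        apply Real.sqrt_le_sqrt
        have h2N : (0:ℝ) ≤ 2 ^ N := by positivity
        nlinarith
    _ = 2 ^ N * Real.sqrt ((N : ℝ) * K) := by
        rw [show (2:ℝ)^N * (2^N * ((N:ℝ) * K)) = ((2:ℝ)^N)^2 * ((N:ℝ)*K) by ring,
          Real.sqrt_mul (sq_nonneg _), Real.sqrt_sq (by positivity)]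

lemma swap3 {α β γ : Type*} [Fintype α] [Fintype β] [Fintype γ] (g : α → β → γ → ℝ) :
    ∑ a, ∑ b, ∑ c, g a b c = ∑ c, ∑ a, ∑ b, g a b c := by
  rw [show (∑ a, ∑ b, ∑ c, g a b c) = ∑ a, ∑ c, ∑ b, g a b c from
    Finset.sum_congr rfl fun a _ => Finset.sum_comm, Finset.sum_comm]

lemma swap4 {α β γ δ : Type*} [Fintype α] [Fintype β] [Fintype γ] [Fintype δ]
    (g : α → β → γ → δ → ℝ) :
    ∑ a, ∑ b, ∑ c, ∑ d, g a b c d = ∑ d, ∑ a, ∑ b, ∑ c, g a b c d := by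
  rw [show (∑ a, ∑ b, ∑ c, ∑ d, g a b c d) = ∑ a, ∑ d, ∑ b, ∑ c, g a b c d from
    Finset.sum_congr rfl fun a _ => swap3 _, Finset.sum_comm]

lemma T1eq {N : ℕ} {α β : Type*} [Fintype α] [Fintype β]
    (e : Fin N → ℝ) (f : Fin N → α → ℝ) (p : Fin N → β → ℝ) (W : α × β → ℝ) :
    ∑ i, e i * ∑ a, f i a * (∑ s, W (a, s) * p i s)
      = ∑ q : α × β, W q * ∑ i, e i * (f i q.1 * p i q.2) := by
  rw [Fintype.sum_prod_type]
  simp_rw [Finset.mul_sum]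
  rw [swap3 (fun a s i => W (a, s) * (e i * (f i a * p i s)))]
  apply Finset.sum_congr rfl; intro i _
  apply Finset.sum_congr rfl; intro a _
  apply Finset.sum_congr rfl; intro s _
  ring

lemma T2eq {N : ℕ} {α β : Type*} [Fintype α] [Fintype β]
    (e : Fin N → ℝ) (p : Fin N → β → ℝ) (W : α × β → ℝ) :
    ∑ i, e i * ∑ a, (∑ s, W (a, s) * p i s) ^ 2
      = ∑ a, ∑ q : β × β, (W (a, q.1) * W (a, q.2)) * ∑ i, e i * (p i q.1 * p i q.2) := by
  simp_rw [sq, Finset.sum_mul_sum, Fintype.sum_prod_type, Finset.mul_sum]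
  rw [swap4 (fun a s t i => W (a, s) * W (a, t) * (e i * (p i s * p i t)))]
  apply Finset.sum_congr rfl; intro i _
  apply Finset.sum_congr rfl; intro a _
  apply Finset.sum_congr rfl; intro s _
  apply Finset.sum_congr rfl; intro t _
  ring

lemma pointwise_bound {m r N : ℕ}
    (F : Fin N → EuclideanSpace ℝ (Fin m)) (P : Fin N → EuclideanSpace ℝ (Fin r))
    (σ : Fin N → Bool) (B : ℝ) (hB : 0 ≤ B)
    (W : EuclideanSpace ℝ (Fin m × Fin r)) (hW : ‖W‖ ≤ B) :
    ∑ i, radSign (σ i) * ‖F i - studentApply W (P i)‖ ^ 2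
      ≤ (∑ i, radSign (σ i) * ‖F i‖ ^ 2)
        + 2 * B * sigNorm (fun i (p : Fin m × Fin r) => F i p.1 * P i p.2) σ
        + B ^ 2 * sigNorm (fun i (q : Fin r × Fin r) => P i q.1 * P i q.2) σ := by
  have hWsq : ∑ p : Fin m × Fin r, W p ^ 2 ≤ B ^ 2 := by
    rw [← eucl_norm_sq]
    exact pow_le_pow_left₀ (norm_nonneg _) hW 2
  have hnorm : ∀ i, ‖F i - studentApply W (P i)‖ ^ 2
      = ∑ a, (F i a - ∑ s, W (a, s) * P i s) ^ 2 := by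
    intro i
    rw [eucl_norm_sq]
    simp only [WithLp.ofLp_sub, Pi.sub_apply, studentApply, WithLp.ofLp_toLp]
  have key : ∑ i, radSign (σ i) * ‖F i - studentApply W (P i)‖ ^ 2
      = (∑ i, radSign (σ i) * ‖F i‖ ^ 2)
        - 2 * (∑ q : Fin m × Fin r, W q *
            sigVec (fun i (p : Fin m × Fin r) => F i p.1 * P i p.2) σ q)
        + ∑ a : Fin m, ∑ q : Fin r × Fin r, (W (a, q.1) * W (a, q.2)) *
            sigVec (fun i (q : Fin r × Fin r) => P i q.1 * P i q.2) σ q := by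
    simp_rw [hnorm]
    have expand : ∀ i, ∑ a, (F i a - ∑ s, W (a, s) * P i s) ^ 2
        = (∑ a, F i a ^ 2) - 2 * (∑ a, F i a * (∑ s, W (a, s) * P i s))
          + ∑ a, (∑ s, W (a, s) * P i s) ^ 2 := by
      intro i
      rw [show (∑ a, (F i a - ∑ s, W (a, s) * P i s) ^ 2)
          = ∑ a, (F i a ^ 2 - 2 * (F i a * (∑ s, W (a, s) * P i s))
              + (∑ s, W (a, s) * P i s) ^ 2) from
        Finset.sum_congr rfl fun a _ => by ring]
      rw [Finset.sum_add_distrib, Finset.sum_sub_distrib, ← Finset.mul_sum]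
    simp_rw [expand, mul_add, mul_sub, Finset.sum_add_distrib, Finset.sum_sub_distrib]
    have e1 : ∀ i, radSign (σ i) * ‖F i‖ ^ 2 = radSign (σ i) * ∑ a, F i a ^ 2 := by
      intro i; rw [eucl_norm_sq]
    simp_rw [e1]
    congr 1
    · congr 1
      simp only [sigVec]
      rw [← T1eq (fun i => radSign (σ i)) (fun i a => F i a) (fun i s => P i s)
        (fun q => W q), Finset.mul_sum]
      exact Finset.sum_congr rfl fun i _ => by ring
    · simp only [sigVec]
      rw [T2eq (fun i => radSign (σ i)) (fun i s => P i s) (fun q => W q)]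
  rw [key]
  have b1 : |∑ q : Fin m × Fin r, W q *
      sigVec (fun i (p : Fin m × Fin r) => F i p.1 * P i p.2) σ q|
      ≤ B * sigNorm (fun i (p : Fin m × Fin r) => F i p.1 * P i p.2) σ := by
    calc |∑ q : Fin m × Fin r, W q *
        sigVec (fun i (p : Fin m × Fin r) => F i p.1 * P i p.2) σ q|
        ≤ Real.sqrt (∑ q : Fin m × Fin r, W q ^ 2)
          * Real.sqrt (∑ q, sigVec (fun i (p : Fin m × Fin r) => F i p.1 * P i p.2) σ q ^ 2) :=
          abs_sum_mul_le _ _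
      _ ≤ B * sigNorm (fun i (p : Fin m × Fin r) => F i p.1 * P i p.2) σ := by
          apply mul_le_mul_of_nonneg_right _ (Real.sqrt_nonneg _)
          rw [show B = Real.sqrt (B ^ 2) from (Real.sqrt_sq hB).symm]
          exact Real.sqrt_le_sqrt hWsq
  have b2 : |∑ a : Fin m, ∑ q : Fin r × Fin r, (W (a, q.1) * W (a, q.2)) *
      sigVec (fun i (q : Fin r × Fin r) => P i q.1 * P i q.2) σ q|
      ≤ B ^ 2 * sigNorm (fun i (q : Fin r × Fin r) => P i q.1 * P i q.2) σ := by
    calc |∑ a : Fin m, ∑ q : Fin r × Fin r, (W (a, q.1) * W (a, q.2)) *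
        sigVec (fun i (q : Fin r × Fin r) => P i q.1 * P i q.2) σ q|
        ≤ ∑ a : Fin m, |∑ q : Fin r × Fin r, (W (a, q.1) * W (a, q.2)) *
            sigVec (fun i (q : Fin r × Fin r) => P i q.1 * P i q.2) σ q| :=
          Finset.abs_sum_le_sum_abs _ _
      _ ≤ ∑ a : Fin m, (∑ s, W (a, s) ^ 2) *
            sigNorm (fun i (q : Fin r × Fin r) => P i q.1 * P i q.2) σ := by
          apply Finset.sum_le_sum; intro a _
          calc |∑ q : Fin r × Fin r, (W (a, q.1) * W (a, q.2)) *
              sigVec (fun i (q : Fin r × Fin r) => P i q.1 * P i q.2) σ q|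
              ≤ Real.sqrt (∑ q : Fin r × Fin r, (W (a, q.1) * W (a, q.2)) ^ 2)
                * Real.sqrt (∑ q, sigVec (fun i (q : Fin r × Fin r) => P i q.1 * P i q.2) σ q ^ 2) :=
                abs_sum_mul_le _ _
            _ = (∑ s, W (a, s) ^ 2) *
                sigNorm (fun i (q : Fin r × Fin r) => P i q.1 * P i q.2) σ := by
                congr 1
                rw [show (∑ q : Fin r × Fin r, (W (a, q.1) * W (a, q.2)) ^ 2)
                    = (∑ s, W (a, s) ^ 2) ^ 2 from by
                  rw [sq (∑ s, W (a, s) ^ 2), Finset.sum_mul_sum, Fintype.sum_prod_type]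
                  exact Finset.sum_congr rfl fun s _ =>
                    Finset.sum_congr rfl fun t _ => by ring]
                exact Real.sqrt_sq (Finset.sum_nonneg fun s _ => sq_nonneg _)
      _ = (∑ p : Fin m × Fin r, W p ^ 2) *
            sigNorm (fun i (q : Fin r × Fin r) => P i q.1 * P i q.2) σ := by
          rw [← Finset.sum_mul, Fintype.sum_prod_type]
      _ ≤ B ^ 2 * sigNorm (fun i (q : Fin r × Fin r) => P i q.1 * P i q.2) σ :=
          mul_le_mul_of_nonneg_right hWsq (sigNorm_nonneg _ _)
  linarith [(abs_le.mp b1).1, (abs_le.mp b2).2]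

/-- **Empirical Rademacher complexity of the distillation loss class.**
If `‖f_T(xᵢ)‖ ≤ D`, `‖φᵢ‖ ≤ C` and `B > 0`, then
`𝔼_σ[ sup_{‖W‖_F ≤ B} (1/N) Σᵢ σᵢ ‖f_T(xᵢ) − Wφᵢ‖² ] ≤ 2BC(D+BC)/√N`,
the expectation being over `σ` uniform on `{−1,+1}^N`. -/
theorem rademacher_distillation_loss_class (d m r N : ℕ)
    (x : Fin N → EuclideanSpace ℝ (Fin d))
    (fT : EuclideanSpace ℝ (Fin d) → EuclideanSpace ℝ (Fin m))
    (D : ℝ) (hD : ∀ i, ‖fT (x i)‖ ≤ D)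
    (φ : Fin N → EuclideanSpace ℝ (Fin r))
    (C : ℝ) (hC : ∀ i, ‖φ i‖ ≤ C)
    (B : ℝ) (hB : 0 < B) :
    (1 / 2 ^ N : ℝ) * ∑ σ : Fin N → Bool,
        (⨆ W : {W : EuclideanSpace ℝ (Fin m × Fin r) // ‖W‖ ≤ B},
          (1 / (N : ℝ)) * ∑ i, radSign (σ i) *
            ‖fT (x i) - studentApply (W : EuclideanSpace ℝ (Fin m × Fin r)) (φ i)‖ ^ 2)
      ≤ 2 * B * C * (D + B * C) / Real.sqrt N := by
  have hne : Nonempty {W : EuclideanSpace ℝ (Fin m × Fin r) // ‖W‖ ≤ B} :=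
    ⟨⟨0, by simpa using hB.le⟩⟩
  rcases Nat.eq_zero_or_pos N with hN0 | hN
  · subst hN0
    simp [ciSup_const]
  have hD0 : 0 ≤ D := le_trans (norm_nonneg _) (hD ⟨0, hN⟩)
  have hC0 : 0 ≤ C := le_trans (norm_nonneg _) (hC ⟨0, hN⟩)
  have hNpos : (0:ℝ) < (N:ℝ) := by exact_mod_cast hN
  have hs : Real.sqrt N * Real.sqrt N = (N:ℝ) := Real.mul_self_sqrt hNpos.le
  have hspos : 0 < Real.sqrt N := Real.sqrt_pos.mpr hNpos
  have h2N : (0:ℝ) < 2 ^ N := by positivity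
  -- the supremum bound for each sign vector
  have hsup : ∀ σ : Fin N → Bool,
      (⨆ W : {W : EuclideanSpace ℝ (Fin m × Fin r) // ‖W‖ ≤ B},
        (1 / (N : ℝ)) * ∑ i, radSign (σ i) *
          ‖fT (x i) - studentApply (W : EuclideanSpace ℝ (Fin m × Fin r)) (φ i)‖ ^ 2)
      ≤ (1 / (N : ℝ)) * ((∑ i, radSign (σ i) * ‖fT (x i)‖ ^ 2)
          + 2 * B * sigNorm (fun i (p : Fin m × Fin r) => fT (x i) p.1 * φ i p.2) σ
          + B ^ 2 * sigNorm (fun i (q : Fin r × Fin r) => φ i q.1 * φ i q.2) σ) := by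
    intro σ
    apply ciSup_le
    intro W
    apply mul_le_mul_of_nonneg_left _ (by positivity)
    exact pointwise_bound (fun i => fT (x i)) φ σ B hB.le W W.2
  have hA : ∑ σ : Fin N → Bool, ∑ i, radSign (σ i) * ‖fT (x i)‖ ^ 2 = 0 := by
    rw [Finset.sum_comm]
    apply Finset.sum_eq_zero; intro i _
    exact sum_radSign_mul i (fun _ => ‖fT (x i)‖ ^ 2) (fun σ b => rfl)
  have hKu : ∀ i, ∑ p : Fin m × Fin r, (fT (x i) p.1 * φ i p.2) ^ 2 ≤ (D * C) ^ 2 := by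
    intro i
    have : ∑ p : Fin m × Fin r, (fT (x i) p.1 * φ i p.2) ^ 2
        = (∑ a, fT (x i) a ^ 2) * (∑ s, φ i s ^ 2) := by
      rw [Finset.sum_mul_sum, Fintype.sum_prod_type]
      exact Finset.sum_congr rfl fun a _ => Finset.sum_congr rfl fun s _ => by ring
    rw [this, ← eucl_norm_sq, ← eucl_norm_sq]
    have h1 : ‖fT (x i)‖ ^ 2 ≤ D ^ 2 := pow_le_pow_left₀ (norm_nonneg _) (hD i) 2
    have h2 : ‖φ i‖ ^ 2 ≤ C ^ 2 := pow_le_pow_left₀ (norm_nonneg _) (hC i) 2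
    nlinarith [sq_nonneg ‖fT (x i)‖, sq_nonneg ‖φ i‖]
  have hKw : ∀ i, ∑ q : Fin r × Fin r, (φ i q.1 * φ i q.2) ^ 2 ≤ (C * C) ^ 2 := by
    intro i
    have : ∑ q : Fin r × Fin r, (φ i q.1 * φ i q.2) ^ 2
        = (∑ s, φ i s ^ 2) * (∑ t, φ i t ^ 2) := by
      rw [Finset.sum_mul_sum, Fintype.sum_prod_type]
      exact Finset.sum_congr rfl fun a _ => Finset.sum_congr rfl fun s _ => by ring
    rw [this, ← eucl_norm_sq]
    have h2 : ‖φ i‖ ^ 2 ≤ C ^ 2 := pow_le_pow_left₀ (norm_nonneg _) (hC i) 2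
    nlinarith [sq_nonneg ‖φ i‖]
  have hsumu : ∑ σ : Fin N → Bool,
      sigNorm (fun i (p : Fin m × Fin r) => fT (x i) p.1 * φ i p.2) σ
      ≤ 2 ^ N * (Real.sqrt N * (D * C)) := by
    calc ∑ σ : Fin N → Bool, sigNorm (fun i (p : Fin m × Fin r) => fT (x i) p.1 * φ i p.2) σ
        ≤ 2 ^ N * Real.sqrt ((N:ℝ) * (D * C) ^ 2) := sum_sigNorm_le _ _ hKu
      _ = 2 ^ N * (Real.sqrt N * (D * C)) := by
          rw [Real.sqrt_mul hNpos.le, Real.sqrt_sq (by positivity)]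
  have hsumw : ∑ σ : Fin N → Bool,
      sigNorm (fun i (q : Fin r × Fin r) => φ i q.1 * φ i q.2) σ
      ≤ 2 ^ N * (Real.sqrt N * (C * C)) := by
    calc ∑ σ : Fin N → Bool, sigNorm (fun i (q : Fin r × Fin r) => φ i q.1 * φ i q.2) σ
        ≤ 2 ^ N * Real.sqrt ((N:ℝ) * (C * C) ^ 2) := sum_sigNorm_le _ _ hKw
      _ = 2 ^ N * (Real.sqrt N * (C * C)) := by
          rw [Real.sqrt_mul hNpos.le, Real.sqrt_sq (by positivity)]
  -- put it together
  calc (1 / 2 ^ N : ℝ) * ∑ σ : Fin N → Bool,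
        (⨆ W : {W : EuclideanSpace ℝ (Fin m × Fin r) // ‖W‖ ≤ B},
          (1 / (N : ℝ)) * ∑ i, radSign (σ i) *
            ‖fT (x i) - studentApply (W : EuclideanSpace ℝ (Fin m × Fin r)) (φ i)‖ ^ 2)
      ≤ (1 / 2 ^ N : ℝ) * ∑ σ : Fin N → Bool,
          (1 / (N : ℝ)) * ((∑ i, radSign (σ i) * ‖fT (x i)‖ ^ 2)
            + 2 * B * sigNorm (fun i (p : Fin m × Fin r) => fT (x i) p.1 * φ i p.2) σ
            + B ^ 2 * sigNorm (fun i (q : Fin r × Fin r) => φ i q.1 * φ i q.2) σ) := by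
        apply mul_le_mul_of_nonneg_left _ (by positivity)
        exact Finset.sum_le_sum fun σ _ => hsup σ
    _ = (1 / 2 ^ N : ℝ) * (1 / (N : ℝ)) *
          ((∑ σ : Fin N → Bool, ∑ i, radSign (σ i) * ‖fT (x i)‖ ^ 2)
            + 2 * B * ∑ σ : Fin N → Bool,
                sigNorm (fun i (p : Fin m × Fin r) => fT (x i) p.1 * φ i p.2) σ
            + B ^ 2 * ∑ σ : Fin N → Bool,
                sigNorm (fun i (q : Fin r × Fin r) => φ i q.1 * φ i q.2) σ) := by
        rw [← Finset.mul_sum, mul_assoc]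
        congr 1
        rw [Finset.sum_add_distrib, Finset.sum_add_distrib, ← Finset.mul_sum, ← Finset.mul_sum]
    _ ≤ (1 / 2 ^ N : ℝ) * (1 / (N : ℝ)) *
          (0 + 2 * B * (2 ^ N * (Real.sqrt N * (D * C)))
            + B ^ 2 * (2 ^ N * (Real.sqrt N * (C * C)))) := by
        apply mul_le_mul_of_nonneg_left _ (by positivity)
        rw [hA]
        have t1 := mul_le_mul_of_nonneg_left hsumu (by positivity : (0:ℝ) ≤ 2 * B)
        have t2 := mul_le_mul_of_nonneg_left hsumw (by positivity : (0:ℝ) ≤ B ^ 2)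
        linarith
    _ ≤ 2 * B * C * (D + B * C) / Real.sqrt N := by
        rw [le_div_iff₀ hspos]
        have expand : (1 / 2 ^ N : ℝ) * (1 / (N : ℝ)) *
            (0 + 2 * B * (2 ^ N * (Real.sqrt N * (D * C)))
              + B ^ 2 * (2 ^ N * (Real.sqrt N * (C * C)))) * Real.sqrt N
            = 2 * B * D * C + B ^ 2 * (C * C) := by
          field_simp
          linear_combination (2 * B * D * C + B ^ 2 * (C * C)) * 2 ^ N * hs
        rw [expand]
        nlinarith [sq_nonneg (B * C)]
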